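/- arXiv:2110.11724 — 2 statements merged into one kernel-verified Lean document; each statement's English description precedes it below -/
import Mathlib

section
/- Let U be a d×d complex unitary matrix and let θ₁, θ₂ be real numbers such that e^{iθ₁} and e^{iθ₂} are two distinct eigenvalues of U. Then there exists a unit vector φ ∈ ℂ^d with |⟨φ, Uφ⟩|² = 1/2 + (1/2)·cos(θ₁ − θ₂). (This realises the relation δ(U)² = 1/2 + (1/2) cos θ between the numerical-range quantity δ(U) and the angular gap θ between a pair of eigenvalues of U.) -/
open Matrix

lemma exists_unit_eigenvector (d : ℕ) (U : Matrix (Fin d) (Fin d) ℂ) (μ : ℂ)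
    (h : μ ∈ spectrum ℂ U) :
    ∃ v : EuclideanSpace ℂ (Fin d), ‖v‖ = 1 ∧
      Matrix.toEuclideanCLM (𝕜 := ℂ) U v = μ • v := by
  rw [← AlgEquiv.spectrum_eq (Matrix.toLinAlgEquiv' :
      Matrix (Fin d) (Fin d) ℂ ≃ₐ[ℂ] _)] at h
  obtain ⟨x, hx⟩ := (Module.End.hasEigenvalue_iff_mem_spectrum.mpr h).exists_hasEigenvector
  have hx' : Matrix.toLin' U x = μ • x := hx.apply_eq_smul
  set w : EuclideanSpace ℂ (Fin d) := (WithLp.equiv 2 (Fin d → ℂ)).symm x with hw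
  have hAw : Matrix.toEuclideanCLM (𝕜 := ℂ) U w = μ • w := by
    rw [hw]; change WithLp.toLp 2 (Matrix.toLin' U x) = _; rw [hx']
    rfl
  have hw0 : w ≠ 0 := by
    simpa [hw] using hx.right
  have hnw : ‖w‖ ≠ 0 := norm_ne_zero_iff.mpr hw0
  refine ⟨((‖w‖ : ℂ))⁻¹ • w, ?_, ?_⟩
  · rw [norm_smul]
    simp [hnw]
  · rw [_root_.map_smul, hAw, smul_comm]

/-- If `e^{iθ₁}` and `e^{iθ₂}` are distinct eigenvalues of a unitary `U`, then there is a
unit vector `φ` with `|⟨φ, Uφ⟩|² = 1/2 + (1/2)cos(θ₁ − θ₂)`. -/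
theorem exists_unit_vector_numerical_range_sq (d : ℕ)
    (U : Matrix (Fin d) (Fin d) ℂ) (hU : U ∈ Matrix.unitaryGroup (Fin d) ℂ)
    (θ₁ θ₂ : ℝ)
    (h₁ : Complex.exp (θ₁ * Complex.I) ∈ spectrum ℂ U)
    (h₂ : Complex.exp (θ₂ * Complex.I) ∈ spectrum ℂ U)
    (hne : Complex.exp (θ₁ * Complex.I) ≠ Complex.exp (θ₂ * Complex.I)) :
    ∃ φ : EuclideanSpace ℂ (Fin d), ‖φ‖ = 1 ∧
      ‖(inner ℂ φ (Matrix.toEuclideanCLM (𝕜 := ℂ) U φ) : ℂ)‖ ^ 2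
        = 1 / 2 + (1 / 2) * Real.cos (θ₁ - θ₂) := by
  set A := Matrix.toEuclideanCLM (𝕜 := ℂ) U with hA
  set μ₁ := Complex.exp (θ₁ * Complex.I)
  set μ₂ := Complex.exp (θ₂ * Complex.I)
  obtain ⟨v₁, hv₁, hAv₁⟩ := exists_unit_eigenvector d U μ₁ h₁
  obtain ⟨v₂, hv₂, hAv₂⟩ := exists_unit_eigenvector d U μ₂ h₂
  -- A is an isometry on inner products
  have hstar : (starRingEnd ℂ) μ₁ * μ₂ ≠ 1 := by
    intro hcon
    apply hne
    have h1 : μ₁ * ((starRingEnd ℂ) μ₁ * μ₂) = μ₂ := by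
      have : μ₁ * (starRingEnd ℂ) μ₁ = 1 := by
        rw [mul_comm, Complex.conj_mul']
        simp [μ₁, Complex.norm_exp]
      rw [← mul_assoc, this, one_mul]
    rw [hcon, mul_one] at h1
    exact h1
  have hUnit : star A * A = 1 := by
    rw [hA, ← map_star, ← _root_.map_mul, hU.1, _root_.map_one]
  have hinner : (inner ℂ v₁ v₂ : ℂ) = 0 := by
    have hpres : (inner ℂ (A v₁) (A v₂) : ℂ) = inner ℂ v₁ v₂ := by
      rw [ContinuousLinearMap.star_eq_adjoint] at hUnit
      calc (inner ℂ (A v₁) (A v₂) : ℂ)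
          = inner ℂ v₁ (ContinuousLinearMap.adjoint A (A v₂)) := by
            rw [ContinuousLinearMap.adjoint_inner_right]
        _ = inner ℂ v₁ ((ContinuousLinearMap.adjoint A * A) v₂) := rfl
        _ = inner ℂ v₁ v₂ := by rw [hUnit]; rfl
    rw [hAv₁, hAv₂, inner_smul_left, inner_smul_right, ← mul_assoc] at hpres
    by_contra hc
    nth_rewrite 2 [← one_mul (inner ℂ v₁ v₂ : ℂ)] at hpres
    exact hstar (mul_right_cancel₀ hc hpres)
  have hinner' : (inner ℂ v₂ v₁ : ℂ) = 0 := by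
    rw [← inner_conj_symm, hinner, map_zero]
  -- the candidate vector
  refine ⟨((Real.sqrt 2 : ℂ))⁻¹ • (v₁ + v₂), ?_, ?_⟩
  · have hsum : ‖v₁ + v₂‖ = Real.sqrt 2 := by
      have := norm_add_sq (𝕜 := ℂ) v₁ v₂
      rw [hv₁, hv₂, hinner] at this
      have h2 : ‖v₁ + v₂‖ ^ 2 = 2 := by rw [this]; norm_num
      rw [← h2, Real.sqrt_sq (norm_nonneg _)]
    rw [norm_smul, hsum]
    have : ‖((Real.sqrt 2 : ℂ))⁻¹‖ = (Real.sqrt 2)⁻¹ := by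
      rw [norm_inv, Complex.norm_real, Real.norm_eq_abs,
        abs_of_nonneg (Real.sqrt_nonneg 2)]
    rw [this]
    have h2 : Real.sqrt 2 ≠ 0 := by positivity
    field_simp
  · have hApply : A (((Real.sqrt 2 : ℂ))⁻¹ • (v₁ + v₂))
        = ((Real.sqrt 2 : ℂ))⁻¹ • (μ₁ • v₁ + μ₂ • v₂) := by
      rw [_root_.map_smul, map_add, hAv₁, hAv₂]
    rw [hApply]
    have hval : (inner ℂ (((Real.sqrt 2 : ℂ))⁻¹ • (v₁ + v₂))
        (((Real.sqrt 2 : ℂ))⁻¹ • (μ₁ • v₁ + μ₂ • v₂)) : ℂ)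
        = (2 : ℂ)⁻¹ * (μ₁ + μ₂) := by
      rw [inner_smul_left, inner_smul_right, inner_add_left, inner_add_right,
        inner_add_right, inner_smul_right, inner_smul_right, inner_smul_right,
        inner_smul_right]
      rw [hinner, hinner']
      have hn1 : (inner ℂ v₁ v₁ : ℂ) = 1 := by
        rw [inner_self_eq_norm_sq_to_K, hv₁]; norm_num
      have hn2 : (inner ℂ v₂ v₂ : ℂ) = 1 := by
        rw [inner_self_eq_norm_sq_to_K, hv₂]; norm_num
      rw [hn1, hn2]
      have hconj : (starRingEnd ℂ) ((Real.sqrt 2 : ℂ))⁻¹ = ((Real.sqrt 2 : ℂ))⁻¹ := by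
        rw [map_inv₀, Complex.conj_ofReal]
      rw [hconj]
      have hs : ((Real.sqrt 2 : ℂ))⁻¹ * ((Real.sqrt 2 : ℂ))⁻¹ = (2 : ℂ)⁻¹ := by
        rw [← mul_inv, ← Complex.ofReal_mul, Real.mul_self_sqrt (by norm_num)]
        norm_num
      linear_combination (μ₁ + μ₂) * hs
    rw [hval]
    have hnorm : ‖(2 : ℂ)⁻¹ * (μ₁ + μ₂)‖ ^ 2 = (1/4) * ‖μ₁ + μ₂‖ ^ 2 := by
      rw [norm_mul, mul_pow]
      norm_num
    rw [hnorm]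
    have hsum2 : ‖μ₁ + μ₂‖ ^ 2 = 2 + 2 * Real.cos (θ₁ - θ₂) := by
      have hre₁ : μ₁.re = Real.cos θ₁ := Complex.exp_ofReal_mul_I_re θ₁
      have hre₂ : μ₂.re = Real.cos θ₂ := Complex.exp_ofReal_mul_I_re θ₂
      have him₁ : μ₁.im = Real.sin θ₁ := Complex.exp_ofReal_mul_I_im θ₁
      have him₂ : μ₂.im = Real.sin θ₂ := Complex.exp_ofReal_mul_I_im θ₂
      rw [Complex.sq_norm, Complex.normSq_apply,
        Complex.add_re, Complex.add_im, hre₁, hre₂, him₁, him₂, Real.cos_sub]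
      nlinarith [Real.sin_sq_add_cos_sq θ₁, Real.sin_sq_add_cos_sq θ₂]
    rw [hsum2]
    ring
end

section
/- Let U be a d×d complex unitary matrix, let a ∈ ℝ and 0 ≤ θ ≤ π, and suppose that every eigenvalue of U is of the form e^{iα} for some α ∈ [a, a + θ], and that both e^{ia} and e^{i(a+θ)} are eigenvalues of U. Then the infimum over unit vectors φ ∈ ℂ^d of |⟨φ, Uφ⟩| equals cos(θ/2); equivalently, δ(U)² = 1/2 + (1/2)·cos θ. -/
open Matrix
open scoped ComplexOrder


lemma aux_exp_add_exp_neg (x : ℝ) :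
    Complex.exp ((x:ℂ) * Complex.I) + Complex.exp (-(x:ℂ) * Complex.I)
      = 2 * (Real.cos x : ℂ) := by
  rw [Complex.exp_mul_I, Complex.exp_mul_I, Complex.cos_neg, Complex.sin_neg,
    Complex.ofReal_cos]
  ring

-- eigenvector from spectrum
lemma aux_eigvec {d : ℕ} (U : Matrix (Fin d) (Fin d) ℂ) {lam : ℂ}
    (h : lam ∈ spectrum ℂ U) :
    ∃ x : Fin d → ℂ, x ≠ 0 ∧ U *ᵥ x = lam • x := by
  rw [← AlgEquiv.spectrum_eq (Matrix.toLinAlgEquiv'),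
    ← Module.End.hasEigenvalue_iff_mem_spectrum] at h
  obtain ⟨x, hx⟩ := h.exists_hasEigenvector
  refine ⟨x, hx.2, ?_⟩
  have := hx.apply_eq_smul
  simpa [Matrix.toLinAlgEquiv'_apply, Matrix.toLin'_apply] using this

-- spectrum from eigenvector
lemma aux_mem_spectrum {d : ℕ} (U : Matrix (Fin d) (Fin d) ℂ) {lam : ℂ}
    {x : Fin d → ℂ} (hx : x ≠ 0) (h : U *ᵥ x = lam • x) :
    lam ∈ spectrum ℂ U := by
  rw [← AlgEquiv.spectrum_eq (Matrix.toLinAlgEquiv'),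
    ← Module.End.hasEigenvalue_iff_mem_spectrum]
  apply Module.End.hasEigenvalue_of_hasEigenvector (x := x)
  refine ⟨Module.End.mem_eigenspace_iff.mpr ?_, hx⟩
  simpa [Matrix.toLinAlgEquiv'_apply, Matrix.toLin'_apply] using h

lemma aux_posSemidef {d : ℕ} (U : Matrix (Fin d) (Fin d) ℂ)
    (hU : U ∈ Matrix.unitaryGroup (Fin d) ℂ)
    (a θ : ℝ) (hθ0 : 0 ≤ θ) (hθπ : θ ≤ Real.pi)
    (hspec : ∀ z ∈ spectrum ℂ U, ∃ α ∈ Set.Icc a (a + θ), z = Complex.exp (α * Complex.I)) :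
    (Complex.exp (-(↑(a + θ/2):ℂ) * Complex.I) • U
      + Complex.exp ((↑(a + θ/2):ℂ) * Complex.I) • Uᴴ
      - ((2 * Real.cos (θ/2) : ℝ) : ℂ) • (1 : Matrix (Fin d) (Fin d) ℂ)).PosSemidef := by
  classical
  set c : ℝ := a + θ/2 with hc
  set m : ℝ := 2 * Real.cos (θ/2) with hm
  set W : Matrix (Fin d) (Fin d) ℂ :=
    Complex.exp (-(c:ℂ) * Complex.I) • U + Complex.exp ((c:ℂ) * Complex.I) • Uᴴ
      - ((m : ℝ) : ℂ) • 1 with hW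
  have hUU : Uᴴ * U = 1 := by
    simpa [Matrix.star_eq_conjTranspose] using (Unitary.mem_iff.mp hU).1
  have hUU' : U * Uᴴ = 1 := by
    simpa [Matrix.star_eq_conjTranspose] using (Unitary.mem_iff.mp hU).2
  have hstar1 : (starRingEnd ℂ) (Complex.exp (-(c:ℂ) * Complex.I))
      = Complex.exp ((c:ℂ) * Complex.I) := by
    rw [← Complex.exp_conj]; congr 1; simp
  have hstar2 : (starRingEnd ℂ) (Complex.exp ((c:ℂ) * Complex.I))
      = Complex.exp (-(c:ℂ) * Complex.I) := by
    rw [← Complex.exp_conj]; congr 1; simp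
  have hWherm : W.IsHermitian := by
    unfold W
    unfold Matrix.IsHermitian
    simp only [Matrix.conjTranspose_sub, Matrix.conjTranspose_add, Matrix.conjTranspose_smul,
      Matrix.conjTranspose_one, Matrix.conjTranspose_conjTranspose, hstar1, hstar2,
      Complex.star_def, Complex.conj_ofReal]
    abel
  have hcomm : U * W = W * U := by
    unfold W
    simp only [Matrix.mul_sub, Matrix.sub_mul, Matrix.mul_add, Matrix.add_mul,
      Matrix.mul_smul, Matrix.smul_mul, mul_one, one_mul, hUU, hUU',
      ← mul_assoc]
  refine hWherm.posSemidef_iff_eigenvalues_nonneg.mpr (Pi.le_def.mpr fun i => ?_)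
  rw [Pi.zero_apply]
  set μ : ℝ := hWherm.eigenvalues i with hμ
  set v : Fin d → ℂ := ⇑(hWherm.eigenvectorBasis i) with hv
  have hv0 : v ≠ 0 := by
    have := hWherm.eigenvectorBasis.orthonormal.ne_zero i
    intro h
    apply this
    ext j
    exact congrFun h j
  have hvW : W *ᵥ v = (μ : ℂ) • v := by
    rw [hWherm.mulVec_eigenvectorBasis]
    norm_num [← RCLike.real_smul_eq_coe_smul (K := ℂ)]
    rfl
  -- invariant subspace argument
  set K : Submodule ℂ (Fin d → ℂ) := Module.End.eigenspace (Matrix.toLin' W) (μ : ℂ) with hK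
  have hmemK : ∀ x, x ∈ K ↔ W *ᵥ x = (μ:ℂ) • x := by
    intro x
    rw [hK, Module.End.mem_eigenspace_iff, Matrix.toLin'_apply]
  haveI : Nontrivial K := by
    refine nontrivial_of_ne ⟨v, (hmemK v).mpr hvW⟩ 0 ?_
    simp [hv0, Submodule.mk_eq_zero]
  have hinv : ∀ x ∈ K, Matrix.toLin' U x ∈ K := by
    intro x hx
    rw [hmemK] at hx ⊢
    rw [Matrix.toLin'_apply, Matrix.mulVec_mulVec, ← hcomm, ← Matrix.mulVec_mulVec, hx,
      Matrix.mulVec_smul]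
  set g : K →ₗ[ℂ] K := (Matrix.toLin' U).restrict hinv with hg
  obtain ⟨lam, hlam⟩ := Module.End.exists_eigenvalue g
  obtain ⟨w₀, hw₀⟩ := hlam.exists_hasEigenvector
  set w : Fin d → ℂ := (w₀ : Fin d → ℂ) with hw
  have hw0 : w ≠ 0 := fun h => hw₀.2 (Subtype.ext h)
  have hUw : U *ᵥ w = lam • w := by
    have := congrArg (Subtype.val) hw₀.apply_eq_smul
    simpa [hg, LinearMap.restrict_apply, Matrix.toLin'_apply] using this
  have hlamspec := aux_mem_spectrum U hw0 hUw
  obtain ⟨α, hα, hαe⟩ := hspec lam hlamspec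
  have hUalam : Uᴴ *ᵥ w = Complex.exp (-(α:ℂ) * Complex.I) • w := by
    have h1 : Uᴴ *ᵥ (U *ᵥ w) = w := by
      rw [Matrix.mulVec_mulVec, hUU, Matrix.one_mulVec]
    rw [hUw, Matrix.mulVec_smul] at h1
    have := congrArg (fun z => Complex.exp (-(α:ℂ) * Complex.I) • z) h1
    simpa [smul_smul, hαe, ← Complex.exp_add, neg_mul, neg_add_cancel] using this
  have hWw : W *ᵥ w = ((2 * Real.cos (α - c) - m : ℝ) : ℂ) • w := by
    rw [hW]
    rw [Matrix.sub_mulVec, Matrix.add_mulVec, Matrix.smul_mulVec,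
      Matrix.smul_mulVec, Matrix.smul_mulVec, Matrix.one_mulVec,
      hUw, hUalam, hαe, smul_smul, smul_smul, ← Complex.exp_add, ← Complex.exp_add]
    rw [← add_smul, ← sub_smul]
    congr 1
    have : (-(c:ℂ)) * Complex.I + (α:ℂ) * Complex.I = ((α - c : ℝ):ℂ) * Complex.I := by
      push_cast; ring
    have h2 : (c:ℂ) * Complex.I + (-(α:ℂ)) * Complex.I = -((α - c : ℝ):ℂ) * Complex.I := by
      push_cast; ring
    rw [this, h2, aux_exp_add_exp_neg (α - c)]
    push_cast; ring
  have hwK : W *ᵥ w = (μ:ℂ) • w := (hmemK w).mp w₀.2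
  have hμeq : (μ : ℂ) = ((2 * Real.cos (α - c) - m : ℝ) : ℂ) := by
    have : ((μ:ℂ) - ((2 * Real.cos (α - c) - m : ℝ) : ℂ)) • w = 0 := by
      rw [sub_smul, ← hwK, ← hWw, sub_self]
    rcases smul_eq_zero.mp this with h | h
    · exact sub_eq_zero.mp h
    · exact absurd h hw0
  have hμreal : μ = 2 * Real.cos (α - c) - m := by exact_mod_cast hμeq
  rw [hμreal, hm]
  have habs : |α - c| ≤ θ/2 := by
    rw [abs_le, hc]
    obtain ⟨h1, h2⟩ := hα
    constructor <;> linarith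
  have hcos : Real.cos (θ/2) ≤ Real.cos (α - c) := by
    rw [← Real.cos_abs (α - c)]
    exact Real.cos_le_cos_of_nonneg_of_le_pi (abs_nonneg _) (by linarith) habs
  linarith

lemma aux_lower {d : ℕ} (U : Matrix (Fin d) (Fin d) ℂ)
    (hU : U ∈ Matrix.unitaryGroup (Fin d) ℂ)
    (a θ : ℝ) (hθ0 : 0 ≤ θ) (hθπ : θ ≤ Real.pi)
    (hspec : ∀ z ∈ spectrum ℂ U, ∃ α ∈ Set.Icc a (a + θ), z = Complex.exp (α * Complex.I))
    (φ : EuclideanSpace ℂ (Fin d)) (hφ : ‖φ‖ = 1) :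
    Real.cos (θ / 2) ≤ ‖(inner ℂ φ (Matrix.toEuclideanCLM (𝕜 := ℂ) U φ) : ℂ)‖ := by
  classical
  have hPSD := aux_posSemidef U hU a θ hθ0 hθπ hspec
  set c : ℝ := a + θ/2 with hc
  set m : ℝ := 2 * Real.cos (θ/2) with hm
  set x : Fin d → ℂ := WithLp.equiv 2 _ φ with hx
  set z : ℂ := inner ℂ φ (Matrix.toEuclideanCLM (𝕜 := ℂ) U φ) with hzdef
  have hz : z = dotProduct (star x) (U *ᵥ x) := by
    rw [hzdef, EuclideanSpace.inner_eq_star_dotProduct, Matrix.ofLp_toEuclideanCLM,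
      dotProduct_comm]
    rfl
  have hzadj : dotProduct (star x) (Uᴴ *ᵥ x) = (starRingEnd ℂ) z := by
    have h1 : dotProduct (star x) (Uᴴ *ᵥ x)
        = inner ℂ φ (Matrix.toEuclideanCLM (𝕜 := ℂ) Uᴴ φ) := by
      rw [EuclideanSpace.inner_eq_star_dotProduct, Matrix.ofLp_toEuclideanCLM,
        dotProduct_comm]
      rfl
    rw [h1]
    have h2 : Matrix.toEuclideanCLM (𝕜 := ℂ) Uᴴ
        = ContinuousLinearMap.adjoint (Matrix.toEuclideanCLM (𝕜 := ℂ) U) := by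
      rw [← ContinuousLinearMap.star_eq_adjoint, ← map_star]
      rw [Matrix.star_eq_conjTranspose]
    rw [h2, ContinuousLinearMap.adjoint_inner_right, ← inner_conj_symm]
  have hone : dotProduct (star x) x = 1 := by
    have : (inner ℂ φ φ : ℂ) = dotProduct (star x) x :=
      (EuclideanSpace.inner_eq_star_dotProduct φ φ).trans (dotProduct_comm _ _)
    rw [← this, inner_self_eq_norm_sq_to_K, hφ]
    norm_num
  have h0 := hPSD.re_dotProduct_nonneg x
  have hexp : dotProduct (star x)
      ((Complex.exp (-(↑(a + θ/2):ℂ) * Complex.I) • U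
        + Complex.exp ((↑(a + θ/2):ℂ) * Complex.I) • Uᴴ
        - ((2 * Real.cos (θ/2) : ℝ) : ℂ) • (1 : Matrix (Fin d) (Fin d) ℂ)) *ᵥ x)
      = Complex.exp (-(c:ℂ) * Complex.I) * z
        + Complex.exp ((c:ℂ) * Complex.I) * (starRingEnd ℂ) z - (m:ℝ) := by
    rw [Matrix.sub_mulVec, Matrix.add_mulVec, Matrix.smul_mulVec,
      Matrix.smul_mulVec, Matrix.smul_mulVec, Matrix.one_mulVec,
      dotProduct_sub, dotProduct_add, dotProduct_smul,
      dotProduct_smul, dotProduct_smul, hzadj, ← hz, hone, smul_eq_mul,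
      smul_eq_mul, smul_eq_mul, mul_one]
  rw [hexp] at h0
  have hre : (0:ℝ) ≤ 2 * (Complex.exp (-(c:ℂ) * Complex.I) * z).re - m := by
    have hconj : Complex.exp ((c:ℂ) * Complex.I) * (starRingEnd ℂ) z
        = (starRingEnd ℂ) (Complex.exp (-(c:ℂ) * Complex.I) * z) := by
      rw [_root_.map_mul, ← Complex.exp_conj]
      congr 2
      simp
    rw [hconj] at h0
    have : RCLike.re (Complex.exp (-(c:ℂ) * Complex.I) * z
        + (starRingEnd ℂ) (Complex.exp (-(c:ℂ) * Complex.I) * z) - ((m:ℝ):ℂ))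
        = 2 * (Complex.exp (-(c:ℂ) * Complex.I) * z).re - m := by
      simp [RCLike.re_to_complex, Complex.add_re, Complex.sub_re, Complex.conj_re]
      ring
    rw [this] at h0
    exact h0
  have h1 : Real.cos (θ/2) ≤ (Complex.exp (-(c:ℂ) * Complex.I) * z).re := by
    rw [hm] at hre; linarith
  calc Real.cos (θ/2) ≤ (Complex.exp (-(c:ℂ) * Complex.I) * z).re := h1
    _ ≤ ‖Complex.exp (-(c:ℂ) * Complex.I) * z‖ := Complex.re_le_norm _
    _ = ‖z‖ := by
        rw [norm_mul, Complex.norm_exp]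
        simp

lemma aux_unit_eigvec {d : ℕ} (U : Matrix (Fin d) (Fin d) ℂ) {lam : ℂ}
    (h : lam ∈ spectrum ℂ U) :
    ∃ φ : EuclideanSpace ℂ (Fin d), ‖φ‖ = 1 ∧
      Matrix.toEuclideanCLM (𝕜 := ℂ) U φ = lam • φ := by
  obtain ⟨x, hx0, hx⟩ := aux_eigvec U h
  set φ₀ : EuclideanSpace ℂ (Fin d) := (WithLp.equiv 2 _).symm x with hφ₀
  have hφ0 : φ₀ ≠ 0 := by
    intro h0
    apply hx0
    have := congrArg (WithLp.equiv 2 (Fin d → ℂ)) h0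
    simpa [hφ₀] using this
  have hTφ₀ : Matrix.toEuclideanCLM (𝕜 := ℂ) U φ₀ = lam • φ₀ := by
    rw [hφ₀, WithLp.equiv_symm_apply, Matrix.toEuclideanCLM_toLp, hx]
    simp [WithLp.toLp_smul]
  have hn0 : ‖φ₀‖ ≠ 0 := norm_ne_zero_iff.mpr hφ0
  refine ⟨((‖φ₀‖ : ℂ))⁻¹ • φ₀, ?_, ?_⟩
  · rw [norm_smul, norm_inv]
    simp only [Complex.norm_real, Real.norm_eq_abs]
    rw [_root_.abs_of_nonneg (norm_nonneg φ₀)]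
    exact inv_mul_cancel₀ hn0
  · rw [_root_.map_smul, hTφ₀, smul_comm]

lemma aux_attain {d : ℕ} (U : Matrix (Fin d) (Fin d) ℂ)
    (hU : U ∈ Matrix.unitaryGroup (Fin d) ℂ)
    (a θ : ℝ) (hθ0 : 0 ≤ θ) (hθπ : θ ≤ Real.pi)
    (ha : Complex.exp (a * Complex.I) ∈ spectrum ℂ U)
    (haθ : Complex.exp ((a + θ) * Complex.I) ∈ spectrum ℂ U) :
    ∃ φ : EuclideanSpace ℂ (Fin d), ‖φ‖ = 1 ∧
      ‖(inner ℂ φ (Matrix.toEuclideanCLM (𝕜 := ℂ) U φ) : ℂ)‖ = Real.cos (θ / 2) := by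
  classical
  have hcosnn : 0 ≤ Real.cos (θ/2) :=
    Real.cos_nonneg_of_mem_Icc ⟨by linarith [Real.pi_pos], by linarith⟩
  rcases eq_or_lt_of_le hθ0 with h0 | hpos
  · -- θ = 0
    obtain ⟨φ, hφ, hTφ⟩ := aux_unit_eigvec U ha
    refine ⟨φ, hφ, ?_⟩
    rw [hTφ, inner_smul_right, inner_self_eq_norm_sq_to_K, hφ]
    rw [← h0]
    simp [Complex.norm_exp]
  · -- θ > 0
    set lm₁ : ℂ := Complex.exp ((a:ℂ) * Complex.I) with hlm₁
    set lm₂ : ℂ := Complex.exp (((a:ℂ) + (θ:ℂ)) * Complex.I) with hlm₂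
    obtain ⟨u, hu, hTu⟩ := aux_unit_eigvec U ha
    obtain ⟨v, hv, hTv⟩ := aux_unit_eigvec U haθ
    set T := Matrix.toEuclideanCLM (𝕜 := ℂ) U with hT
    have hid : ∀ w : EuclideanSpace ℂ (Fin d),
        ContinuousLinearMap.adjoint T (T w) = w := by
      intro w
      have h1 : ContinuousLinearMap.adjoint T * T = 1 := by
        rw [← ContinuousLinearMap.star_eq_adjoint, hT, ← map_star, ← _root_.map_mul]
        rw [(Unitary.mem_iff.mp hU).1, _root_.map_one]
      calc ContinuousLinearMap.adjoint T (T w)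
          = (ContinuousLinearMap.adjoint T * T) w := rfl
        _ = w := by rw [h1]; rfl
    have huu : (inner ℂ u u : ℂ) = 1 := by
      rw [inner_self_eq_norm_sq_to_K, hu]; norm_num
    have hvv : (inner ℂ v v : ℂ) = 1 := by
      rw [inner_self_eq_norm_sq_to_K, hv]; norm_num
    have horth : (inner ℂ u v : ℂ) = 0 := by
      have key : (starRingEnd ℂ) lm₁ * lm₂ * (inner ℂ u v : ℂ) = inner ℂ u v := by
        calc (starRingEnd ℂ) lm₁ * lm₂ * (inner ℂ u v : ℂ)
            = inner ℂ (lm₁ • u) (lm₂ • v) := by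
              rw [inner_smul_left, inner_smul_right]; ring
          _ = inner ℂ (T u) (T v) := by rw [hTu, hTv]
          _ = inner ℂ u (ContinuousLinearMap.adjoint T (T v)) := by
              rw [ContinuousLinearMap.adjoint_inner_right]
          _ = inner ℂ u v := by rw [hid]
      have hfac : (starRingEnd ℂ) lm₁ * lm₂ ≠ 1 := by
        rw [hlm₁, hlm₂, ← Complex.exp_conj, ← Complex.exp_add]
        intro hcontra
        have : ((starRingEnd ℂ) ((a:ℂ) * Complex.I) + ((a:ℂ) + (θ:ℂ)) * Complex.I)
            = (θ:ℂ) * Complex.I := by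
          rw [_root_.map_mul, Complex.conj_ofReal, Complex.conj_I]
          ring
        rw [this, Complex.exp_eq_one_iff] at hcontra
        obtain ⟨n, hn⟩ := hcontra
        have hn' : (θ:ℂ) * Complex.I = ((n:ℂ) * (2 * (Real.pi:ℂ))) * Complex.I := by
          rw [hn]; ring
        have hθn : (θ:ℂ) = (n:ℂ) * (2 * (Real.pi:ℂ)) :=
          mul_right_cancel₀ Complex.I_ne_zero hn'
        have hθr : θ = (n:ℝ) * (2 * Real.pi) := by exact_mod_cast hθn
        rcases le_or_gt (n:ℝ) 0 with hn0 | hn1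
        · nlinarith [Real.pi_pos]
        · have : (1:ℝ) ≤ (n:ℝ) := by exact_mod_cast hn1
          nlinarith [Real.pi_pos]
      have := mul_eq_zero.mp (by linear_combination key : ((starRingEnd ℂ) lm₁ * lm₂ - 1) * (inner ℂ u v : ℂ) = 0)
      rcases this with h | h
      · exact absurd (sub_eq_zero.mp h) hfac
      · exact h
    have hvu : (inner ℂ v u : ℂ) = 0 := by
      rw [← inner_conj_symm, horth, map_zero]
    set s : ℂ := ((Real.sqrt 2 : ℝ) : ℂ)⁻¹ with hs
    have hss : (starRingEnd ℂ) s * s = 1/2 := by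
      rw [hs, map_inv₀, Complex.conj_ofReal, ← mul_inv, ← Complex.ofReal_mul,
        Real.mul_self_sqrt (by norm_num)]
      norm_num
    set φ : EuclideanSpace ℂ (Fin d) := s • (u + v) with hφdef
    have hinner : (inner ℂ φ (T φ) : ℂ) = (1/2) * (lm₁ + lm₂) := by
      rw [hφdef, _root_.map_smul, map_add, hTu, hTv, inner_smul_left, inner_smul_right,
        inner_add_left, inner_add_right, inner_add_right, inner_smul_right, inner_smul_right,
        inner_smul_right, inner_smul_right, huu, hvv, horth, hvu]
      rw [← mul_assoc, hss]
      ring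
    have hφφ : (inner ℂ φ φ : ℂ) = 1 := by
      rw [hφdef, inner_smul_left, inner_smul_right, inner_add_left, inner_add_right,
        inner_add_right, huu, hvv, horth, hvu, ← mul_assoc, hss]
      norm_num
    have hφnorm : ‖φ‖ = 1 := by
      have h1 := inner_self_eq_norm_sq_to_K (𝕜 := ℂ) (E := EuclideanSpace ℂ (Fin d)) φ
      rw [hφφ] at h1
      have h2 : (‖φ‖:ℝ) ^ 2 = 1 := by
        have h3 : ((‖φ‖ ^ 2 : ℝ) : ℂ) = ((1:ℝ):ℂ) := by push_cast; exact h1.symm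
        exact_mod_cast h3
      calc ‖φ‖ = Real.sqrt (‖φ‖ ^ 2) := (Real.sqrt_sq (norm_nonneg φ)).symm
        _ = 1 := by rw [h2]; exact Real.sqrt_one
    have hsum : lm₁ + lm₂
        = (2 * Real.cos (θ/2) : ℝ) * Complex.exp ((↑(a + θ/2):ℂ) * Complex.I) := by
      rw [hlm₁, hlm₂]
      have e1 : (a:ℂ) * Complex.I = -(↑(θ/2):ℂ) * Complex.I + (↑(a + θ/2):ℂ) * Complex.I := by
        push_cast; ring
      have e2 : ((a:ℂ) + (θ:ℂ)) * Complex.I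
          = (↑(θ/2):ℂ) * Complex.I + (↑(a + θ/2):ℂ) * Complex.I := by
        push_cast; ring
      rw [e1, e2, Complex.exp_add, Complex.exp_add, ← add_mul, add_comm,
        aux_exp_add_exp_neg (θ/2)]
      push_cast; ring
    refine ⟨φ, hφnorm, ?_⟩
    rw [hinner, hsum]
    have hre0 : ((↑(a + θ/2):ℂ) * Complex.I).re = 0 := by simp
    rw [norm_mul, norm_mul, Complex.norm_exp, hre0,
      Real.exp_zero, mul_one]
    simp only [Complex.norm_real, Real.norm_eq_abs]
    rw [_root_.abs_of_nonneg (by positivity : (0:ℝ) ≤ 2 * Real.cos (θ/2))]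
    norm_num
    ring

/-- If the eigenvalues of a unitary `U` all lie on the arc `{e^{iα} : α ∈ [a, a+θ]}` with
`0 ≤ θ ≤ π`, and both endpoints `e^{ia}`, `e^{i(a+θ)}` are eigenvalues, then
`δ(U) = inf over unit vectors φ of |⟨φ, Uφ⟩|` equals `cos(θ/2)`; equivalently
`δ(U)² = 1/2 + (1/2)cos θ`. -/
theorem inf_numerical_range_unitary_arc (d : ℕ)
    (U : Matrix (Fin d) (Fin d) ℂ) (hU : U ∈ Matrix.unitaryGroup (Fin d) ℂ)
    (a θ : ℝ) (hθ0 : 0 ≤ θ) (hθπ : θ ≤ Real.pi)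
    (hspec : ∀ z ∈ spectrum ℂ U, ∃ α ∈ Set.Icc a (a + θ), z = Complex.exp (α * Complex.I))
    (ha : Complex.exp (a * Complex.I) ∈ spectrum ℂ U)
    (haθ : Complex.exp ((a + θ) * Complex.I) ∈ spectrum ℂ U) :
    sInf {r : ℝ | ∃ φ : EuclideanSpace ℂ (Fin d), ‖φ‖ = 1 ∧
        r = ‖(inner ℂ φ (Matrix.toEuclideanCLM (𝕜 := ℂ) U φ) : ℂ)‖}
      = Real.cos (θ / 2)
    ∧ Real.cos (θ / 2) ^ 2 = 1 / 2 + (1 / 2) * Real.cos θ := by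
  constructor
  · obtain ⟨φ₀, hφ₀, hval₀⟩ := aux_attain U hU a θ hθ0 hθπ ha haθ
    have hmem : Real.cos (θ / 2) ∈ {r : ℝ | ∃ φ : EuclideanSpace ℂ (Fin d), ‖φ‖ = 1 ∧
        r = ‖(inner ℂ φ (Matrix.toEuclideanCLM (𝕜 := ℂ) U φ) : ℂ)‖} :=
      ⟨φ₀, hφ₀, hval₀.symm⟩
    have hlb : ∀ r ∈ {r : ℝ | ∃ φ : EuclideanSpace ℂ (Fin d), ‖φ‖ = 1 ∧
        r = ‖(inner ℂ φ (Matrix.toEuclideanCLM (𝕜 := ℂ) U φ) : ℂ)‖}, Real.cos (θ / 2) ≤ r := by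
      rintro r ⟨φ, hφ, rfl⟩
      exact aux_lower U hU a θ hθ0 hθπ hspec φ hφ
    exact le_antisymm (csInf_le ⟨Real.cos (θ / 2), hlb⟩ hmem) (le_csInf ⟨_, hmem⟩ hlb)
  · rw [Real.cos_sq, show 2 * (θ/2) = θ by ring]
    ring
end
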